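/- Let h, ℓ ∈ ℂ and let g : ℝ → ℂ be twice differentiable on (0,∞). For x₀, x₂ > 0 set Ψ(x₀, x₂) = x₂^{-2h} · g(x₀/x₂). Suppose that for all x₀, x₂ > 0 the partial differential equation ∂²Ψ/∂x₀² = ℓ(x₀^{-1} - (x₂+x₀)^{-1})·∂Ψ/∂x₂ - ℓ·x₀^{-1}·∂Ψ/∂x₀ + ℓh(x₀^{-2} + (x₂+x₀)^{-2})·Ψ holds, where ∂Ψ/∂x₀ and ∂²Ψ/∂x₀² denote the first and second derivatives of the function x₀ ↦ Ψ(x₀,x₂) and ∂Ψ/∂x₂ denotes the derivative of x₂ ↦ Ψ(x₀,x₂). Then the function ψ : (0,1) → ℂ defined by ψ(z) = z^{-2h} · g((1-z)/z) = Ψ(1-z, z) is twice differentiable and satisfies, for all z ∈ (0,1): z(1-z)ψ''(z) + ((4h+2-ℓ)(1-z) - ℓ)ψ'(z) + (1/(z(1-z)))·((2h(2h+1) - 3ℓh)(1-z)² - ℓh)·ψ(z) = 0. -/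

import Mathlib

noncomputable def Efun (h : ℂ) (x : ℝ) : ℂ := Complex.exp ((Real.log x : ℂ) * (-(2*h)))

lemma Efun_ne_zero (h : ℂ) (x : ℝ) : Efun h x ≠ 0 := Complex.exp_ne_zero _

lemma cpow_eq_Efun (h : ℂ) {x : ℝ} (hx : 0 < x) : (x : ℂ) ^ (-(2*h)) = Efun h x := by
  rw [Complex.cpow_def_of_ne_zero (by exact_mod_cast hx.ne'), ← Complex.ofReal_log hx.le]
  rfl

lemma Efun_hasDerivAt (h : ℂ) {x : ℝ} (hx : 0 < x) :
    HasDerivAt (Efun h) (Efun h x * (-(2*h) * (x : ℂ)⁻¹)) x := by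
  have h1 : HasDerivAt (fun t : ℝ => ((Real.log t : ℝ) : ℂ)) ((x⁻¹ : ℝ) : ℂ) x :=
    (Real.hasDerivAt_log hx.ne').ofReal_comp
  have h2 := (h1.mul_const (-(2*h))).cexp
  refine h2.congr_deriv (Eq.symm ?_)
  simp only [Efun]
  push_cast
  ring

lemma q_hasDerivAt {z : ℝ} (hz : 0 < z) :
    HasDerivAt (fun t : ℝ => (1 - t) / t) (-(z^2)⁻¹) z := by
  have h1 : HasDerivAt (fun t : ℝ => 1 - t) (-1) z := by
    simpa using (hasDerivAt_id z).const_sub 1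
  have h2 := h1.div (hasDerivAt_id z) hz.ne'
  refine h2.congr_deriv (Eq.symm ?_)
  simp only [id]
  field_simp
  ring

lemma scomp_q {G : ℝ → ℂ} {z : ℝ} (hz : 0 < z)
    (hG : DifferentiableAt ℝ G ((1-z)/z)) :
    HasDerivAt (fun t : ℝ => G ((1 - t) / t)) ((-(z^2)⁻¹ : ℝ) • deriv G ((1-z)/z)) z :=
  HasDerivAt.scomp z hG.hasDerivAt (q_hasDerivAt hz)

lemma scomp_div_const {G : ℝ → ℂ} {z x : ℝ} (hG : DifferentiableAt ℝ G (x/z)) :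
    HasDerivAt (fun t : ℝ => G (t / z)) (((1:ℝ)/z) • deriv G (x/z)) x :=
  HasDerivAt.scomp x hG.hasDerivAt ((hasDerivAt_id x).div_const z)

lemma scomp_const_div {G : ℝ → ℂ} {c z : ℝ} (hz : z ≠ 0) (hG : DifferentiableAt ℝ G (c/z)) :
    HasDerivAt (fun t : ℝ => G (c / t)) ((c * (-(z^2)⁻¹) : ℝ) • deriv G (c/z)) z := by
  have hinner : HasDerivAt (fun v : ℝ => c / v) (c * (-(z^2)⁻¹)) z := by
    simpa [div_eq_mul_inv] using (hasDerivAt_inv hz).const_mul c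
  exact HasDerivAt.scomp z hG.hasDerivAt hinner

set_option maxHeartbeats 1000000

/-- Theorem B.1 (change of variables): if `Ψ(x₀,x₂) = x₂^{-2h}·g(x₀/x₂)` satisfies
the PDE of Lemma B.1 for all `x₀, x₂ > 0`, then `ψ(z) = Ψ(1-z, z)` is twice
differentiable on `(0,1)` and satisfies the BPZ-type ODE. Powers of positive reals
with complex exponents are principal powers (complex `cpow` of a positive real base). -/
theorem pde_to_bpz_ode
    (h ℓ : ℂ) (g : ℝ → ℂ)
    (hg1 : ∀ u ∈ Set.Ioi (0 : ℝ), DifferentiableAt ℝ g u)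
    (hg2 : ∀ u ∈ Set.Ioi (0 : ℝ), DifferentiableAt ℝ (deriv g) u)
    (Ψ : ℝ → ℝ → ℂ)
    (hΨ : ∀ x₀ x₂ : ℝ, Ψ x₀ x₂ = ((x₂ : ℂ) ^ (-(2 * h))) * g (x₀ / x₂))
    (hpde : ∀ x₀ ∈ Set.Ioi (0 : ℝ), ∀ x₂ ∈ Set.Ioi (0 : ℝ),
      deriv (deriv (fun u : ℝ => Ψ u x₂)) x₀ =
        ℓ * ((x₀ : ℂ)⁻¹ - ((x₂ : ℂ) + (x₀ : ℂ))⁻¹) * deriv (fun v : ℝ => Ψ x₀ v) x₂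
          - ℓ * (x₀ : ℂ)⁻¹ * deriv (fun u : ℝ => Ψ u x₂) x₀
          + ℓ * h * (((x₀ : ℂ) ^ 2)⁻¹ + (((x₂ : ℂ) + (x₀ : ℂ)) ^ 2)⁻¹) * Ψ x₀ x₂)
    (ψ : ℝ → ℂ)
    (hψ : ∀ z : ℝ, ψ z = Ψ (1 - z) z) :
    (∀ z ∈ Set.Ioo (0 : ℝ) 1, DifferentiableAt ℝ ψ z) ∧
    (∀ z ∈ Set.Ioo (0 : ℝ) 1, DifferentiableAt ℝ (deriv ψ) z) ∧
    ∀ z ∈ Set.Ioo (0 : ℝ) 1,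
      (z : ℂ) * (1 - (z : ℂ)) * deriv (deriv ψ) z
        + ((4 * h + 2 - ℓ) * (1 - (z : ℂ)) - ℓ) * deriv ψ z
        + (1 / ((z : ℂ) * (1 - (z : ℂ))))
            * ((2 * h * (2 * h + 1) - 3 * ℓ * h) * (1 - (z : ℂ)) ^ 2 - ℓ * h) * ψ z = 0 := by
  have hψEqOn : Set.EqOn ψ (fun t => Efun h t * g ((1 - t) / t)) (Set.Ioo (0:ℝ) 1) := by
    intro t ht
    simp only
    rw [hψ, hΨ, cpow_eq_Efun h ht.1]
  -- first derivative of the explicit formula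
  have hφD : ∀ z ∈ Set.Ioo (0:ℝ) 1,
      HasDerivAt (fun t => Efun h t * g ((1 - t) / t))
        (Efun h z * (-(2*h) * (z:ℂ)⁻¹ * g ((1-z)/z) - ((z:ℂ)^2)⁻¹ * deriv g ((1-z)/z))) z := by
    intro z hz
    have hz0 := hz.1
    have hz' : (z:ℂ) ≠ 0 := by exact_mod_cast hz0.ne'
    have hu : (0:ℝ) < (1 - z) / z := div_pos (by linarith [hz.2]) hz0
    have hgc := scomp_q hz0 (hg1 _ (Set.mem_Ioi.mpr hu))
    have := (Efun_hasDerivAt h hz0).mul hgc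
    refine this.congr_deriv (Eq.symm ?_)
    simp only [Complex.real_smul]
    set A := g ((1-z)/z)
    set B := deriv g ((1-z)/z)
    set C := deriv (deriv g) ((1-z)/z)
    push_cast
    field_simp
    try ring_nf
    try field_simp
    try ring_nf
    try field_simp
    try ring
  have hψD : ∀ z ∈ Set.Ioo (0:ℝ) 1,
      HasDerivAt ψ
        (Efun h z * (-(2*h) * (z:ℂ)⁻¹ * g ((1-z)/z) - ((z:ℂ)^2)⁻¹ * deriv g ((1-z)/z))) z := by
    intro z hz
    exact (hφD z hz).congr_of_eventuallyEq
      (Filter.eventuallyEq_of_mem (isOpen_Ioo.mem_nhds hz) hψEqOn)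
  have hdψEq : Set.EqOn (deriv ψ)
      (fun t => Efun h t * (-(2*h) * (t:ℂ)⁻¹ * g ((1-t)/t) - ((t:ℂ)^2)⁻¹ * deriv g ((1-t)/t)))
      (Set.Ioo (0:ℝ) 1) := fun z hz => (hψD z hz).deriv
  have hφ'D : ∀ z ∈ Set.Ioo (0:ℝ) 1,
      HasDerivAt
        (fun t => Efun h t * (-(2*h) * (t:ℂ)⁻¹ * g ((1-t)/t) - ((t:ℂ)^2)⁻¹ * deriv g ((1-t)/t)))
        (Efun h z * ((4*h^2+2*h) * ((z:ℂ)^2)⁻¹ * g ((1-z)/z)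
          + (4*h+2) * ((z:ℂ)^3)⁻¹ * deriv g ((1-z)/z)
          + ((z:ℂ)^4)⁻¹ * deriv (deriv g) ((1-z)/z))) z := by
    intro z hz
    have hz0 := hz.1
    have hz' : (z:ℂ) ≠ 0 := by exact_mod_cast hz0.ne'
    have hu : (0:ℝ) < (1 - z) / z := div_pos (by linarith [hz.2]) hz0
    have hgc := scomp_q hz0 (hg1 _ (Set.mem_Ioi.mpr hu))
    have hg'c := scomp_q hz0 (hg2 _ (Set.mem_Ioi.mpr hu))
    have hinv : HasDerivAt (fun t : ℝ => ((t:ℂ))⁻¹) (((-(z^2)⁻¹ : ℝ)) : ℂ) z := by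
      have := (hasDerivAt_inv hz0.ne').ofReal_comp
      have hfe : (fun t : ℝ => ((t⁻¹ : ℝ) : ℂ)) = fun t : ℝ => ((t:ℂ))⁻¹ := by
        funext t; push_cast; ring
      rwa [hfe] at this
    have hinv2 : HasDerivAt (fun t : ℝ => ((t:ℂ)^2)⁻¹)
        ((((-(2 * z^1) / (z^2)^2) : ℝ)) : ℂ) z := by
      have := (((hasDerivAt_pow 2 z).inv (pow_ne_zero 2 hz0.ne'))).ofReal_comp
      have hfe : (fun t : ℝ => (((t^2)⁻¹ : ℝ) : ℂ)) = fun t : ℝ => ((t:ℂ)^2)⁻¹ := by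
        funext t; push_cast; ring
      replace this : HasDerivAt (fun t : ℝ => (((t^2)⁻¹ : ℝ) : ℂ)) _ z := this
      rw [hfe] at this
      refine this.congr_deriv (Eq.symm ?_)
      try push_cast
      try ring
    have T1 := (hinv.const_mul (-(2*h))).mul hgc
    have T2 := hinv2.mul hg'c
    have := (Efun_hasDerivAt h hz0).mul (T1.sub T2)
    refine this.congr_deriv (Eq.symm ?_)
    simp only [Pi.mul_apply, Pi.sub_apply]
    simp only [Complex.real_smul]
    set A := g ((1-z)/z)
    set B := deriv g ((1-z)/z)
    set C := deriv (deriv g) ((1-z)/z)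
    push_cast
    field_simp
    try ring_nf
    try field_simp
    try ring_nf
    try field_simp
    try ring
  have hψ'D : ∀ z ∈ Set.Ioo (0:ℝ) 1,
      HasDerivAt (deriv ψ)
        (Efun h z * ((4*h^2+2*h) * ((z:ℂ)^2)⁻¹ * g ((1-z)/z)
          + (4*h+2) * ((z:ℂ)^3)⁻¹ * deriv g ((1-z)/z)
          + ((z:ℂ)^4)⁻¹ * deriv (deriv g) ((1-z)/z))) z := by
    intro z hz
    exact (hφ'D z hz).congr_of_eventuallyEq
      (Filter.eventuallyEq_of_mem (isOpen_Ioo.mem_nhds hz) hdψEq)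
  refine ⟨fun z hz => (hψD z hz).differentiableAt,
    fun z hz => (hψ'D z hz).differentiableAt, ?_⟩
  intro z hz
  have hz0 := hz.1
  have hz1 := hz.2
  have hx0 : (0:ℝ) < 1 - z := by linarith
  have hu : (0:ℝ) < (1 - z) / z := div_pos hx0 hz0
  have hz' : (z:ℂ) ≠ 0 := by exact_mod_cast hz0.ne'
  have hw' : 1 - (z:ℂ) ≠ 0 := by
    intro hc
    have h1 : (z:ℂ) = 1 := by linear_combination -hc
    have h2 : z = 1 := by exact_mod_cast h1
    linarith
  have hE : Efun h z ≠ 0 := Efun_ne_zero h z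
  -- partial derivatives in the first variable
  have hfun : (fun x₀ : ℝ => Ψ x₀ z) = fun x₀ => Efun h z * g (x₀ / z) := by
    funext x₀
    rw [hΨ, cpow_eq_Efun h hz0]
  have hD0At : ∀ x₀ ∈ Set.Ioi (0:ℝ),
      HasDerivAt (fun x : ℝ => Efun h z * g (x / z))
        ((Efun h z * (z:ℂ)⁻¹) * deriv g (x₀ / z)) x₀ := by
    intro x₀ hx
    have hc := scomp_div_const (z := z) (hg1 (x₀/z) (div_pos hx hz0))
    have := hc.const_mul (Efun h z)
    refine this.congr_deriv (Eq.symm ?_)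
    simp only [Complex.real_smul]
    set B := deriv g (x₀/z)
    push_cast
    field_simp
    try ring_nf
    try field_simp
    try ring
  have hder0 : Set.EqOn (deriv (fun x : ℝ => Efun h z * g (x / z)))
      (fun x₀ => (Efun h z * (z:ℂ)⁻¹) * deriv g (x₀ / z)) (Set.Ioi 0) :=
    fun x hx => (hD0At x hx).deriv
  have hD00 : HasDerivAt (fun x₀ : ℝ => (Efun h z * (z:ℂ)⁻¹) * deriv g (x₀ / z))
      ((Efun h z * ((z:ℂ)^2)⁻¹) * deriv (deriv g) ((1-z)/z)) (1-z) := by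
    have hc := scomp_div_const (z := z) (hg2 ((1-z)/z) hu)
    have := hc.const_mul (Efun h z * (z:ℂ)⁻¹)
    refine this.congr_deriv (Eq.symm ?_)
    simp only [Complex.real_smul]
    set A := g ((1-z)/z)
    set B := deriv g ((1-z)/z)
    set C := deriv (deriv g) ((1-z)/z)
    push_cast
    field_simp
    try ring_nf
    try field_simp
    try ring_nf
    try field_simp
    try ring
  have key0 : deriv (deriv (fun u : ℝ => Ψ u z)) (1-z)
      = (Efun h z * ((z:ℂ)^2)⁻¹) * deriv (deriv g) ((1-z)/z) := by
    rw [hfun]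
    rw [Filter.EventuallyEq.deriv_eq
      (Filter.eventuallyEq_of_mem (isOpen_Ioi.mem_nhds hx0) hder0)]
    exact hD00.deriv
  have key1 : deriv (fun u : ℝ => Ψ u z) (1-z)
      = (Efun h z * (z:ℂ)⁻¹) * deriv g ((1-z)/z) := by
    rw [hfun]
    exact (hD0At (1-z) hx0).deriv
  -- derivative in the second variable
  have hEq2 : Set.EqOn (fun v : ℝ => Ψ (1-z) v)
      (fun v => Efun h v * g ((1-z)/v)) (Set.Ioi 0) := by
    intro v hv
    simp only
    rw [hΨ, cpow_eq_Efun h hv]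
  have hD2 : HasDerivAt (fun v : ℝ => Efun h v * g ((1-z)/v))
      (Efun h z * (-(2*h) * (z:ℂ)⁻¹ * g ((1-z)/z)
        - (1-(z:ℂ)) * ((z:ℂ)^2)⁻¹ * deriv g ((1-z)/z))) z := by
    have hgc := scomp_const_div (c := 1-z) hz0.ne' (hg1 _ hu)
    have := (Efun_hasDerivAt h hz0).mul hgc
    refine this.congr_deriv (Eq.symm ?_)
    simp only [Complex.real_smul]
    set A := g ((1-z)/z)
    set B := deriv g ((1-z)/z)
    set C := deriv (deriv g) ((1-z)/z)
    push_cast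
    field_simp
    try ring_nf
    try field_simp
    try ring_nf
    try field_simp
    try ring
  have key2 : deriv (fun v : ℝ => Ψ (1-z) v) z
      = Efun h z * (-(2*h) * (z:ℂ)⁻¹ * g ((1-z)/z)
        - (1-(z:ℂ)) * ((z:ℂ)^2)⁻¹ * deriv g ((1-z)/z)) := by
    rw [Filter.EventuallyEq.deriv_eq
      (Filter.eventuallyEq_of_mem (isOpen_Ioi.mem_nhds hz0) hEq2)]
    exact hD2.deriv
  -- instantiate the PDE
  have pdeq := hpde (1-z) (Set.mem_Ioi.mpr hx0) z (Set.mem_Ioi.mpr hz0)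
  rw [key0, key1, key2, hΨ, cpow_eq_Efun h hz0] at pdeq
  push_cast at pdeq
  -- rewrite the goal
  have e0 : ψ z = Efun h z * g ((1-z)/z) := hψEqOn hz
  have e1 : deriv ψ z
      = Efun h z * (-(2*h) * (z:ℂ)⁻¹ * g ((1-z)/z) - ((z:ℂ)^2)⁻¹ * deriv g ((1-z)/z)) :=
    (hψD z hz).deriv
  have e2 : deriv (deriv ψ) z
      = Efun h z * ((4*h^2+2*h) * ((z:ℂ)^2)⁻¹ * g ((1-z)/z)
          + (4*h+2) * ((z:ℂ)^3)⁻¹ * deriv g ((1-z)/z)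
          + ((z:ℂ)^4)⁻¹ * deriv (deriv g) ((1-z)/z)) :=
    (hψ'D z hz).deriv
  rw [e0, e1, e2]
  obtain ⟨A, hA⟩ : ∃ A : ℂ, A = g ((1-z)/z) := ⟨_, rfl⟩
  obtain ⟨B, hB⟩ : ∃ B : ℂ, B = deriv g ((1-z)/z) := ⟨_, rfl⟩
  obtain ⟨C, hC⟩ : ∃ C : ℂ, C = deriv (deriv g) ((1-z)/z) := ⟨_, rfl⟩
  obtain ⟨E, hEe⟩ : ∃ E : ℂ, E = Efun h z := ⟨_, rfl⟩
  rw [← hA, ← hB, ← hC, ← hEe] at pdeq ⊢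
  have h1 : (z:ℂ) + (1 - (z:ℂ)) = 1 := by ring
  rw [h1] at pdeq
  obtain ⟨W, hW⟩ : ∃ W : ℂ, W = 1 - (z:ℂ) := ⟨_, rfl⟩
  rw [← hW] at pdeq ⊢
  rw [← hW] at hw'
  field_simp at pdeq ⊢
  have hD1 : (W * ((z:ℂ) * (z:ℂ) ^ 2) * (W * (z:ℂ))) ≠ 0 :=
    mul_ne_zero (mul_ne_zero hw' (mul_ne_zero hz' (pow_ne_zero 2 hz'))) (mul_ne_zero hw' hz')
  have hD2 : ((z:ℂ) ^ 2 * (z:ℂ) ^ 3 * (z:ℂ) ^ 4 * ((z:ℂ) * (z:ℂ) ^ 2)) ≠ 0 :=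
    mul_ne_zero (mul_ne_zero (mul_ne_zero (pow_ne_zero 2 hz') (pow_ne_zero 3 hz'))
      (pow_ne_zero 4 hz')) (mul_ne_zero hz' (pow_ne_zero 2 hz'))
  rw [hW] at pdeq ⊢
  linear_combination pdeq
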